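/- Let K be a field, S = K[x,y,z,w], and I ⊆ S a monomial ideal such that Ass(S/I) = {(x,y), (x,z), (x,w)}. Then S/I is clean. -/

import Mathlib

open MvPolynomial

/-- The depth of an `S`-module `M` with respect to an ideal `m`: the supremum of
lengths of `M`-regular sequences consisting of elements of `m`. -/
noncomputable def mDepth (S : Type*) [CommRing S] (m : Ideal S)
    (M : Type*) [AddCommGroup M] [Module S M] : ℕ∞ :=
  sSup {n : ℕ∞ | ∃ rs : List S, (rs.length : ℕ∞) = n ∧ (∀ r ∈ rs, r ∈ m) ∧
    RingTheory.Sequence.IsRegular M rs}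

/-- `M` is a Cohen–Macaulay `S`-module (w.r.t. the ideal `m`) if its depth with
respect to `m` equals its Krull dimension, i.e. the Krull dimension of `S ⧸ ann M`. -/
def IsCM (S : Type*) [CommRing S] (m : Ideal S)
    (M : Type*) [AddCommGroup M] [Module S M] : Prop :=
  (mDepth S m M : WithBot ℕ∞) = ringKrullDim (S ⧸ Module.annihilator S M)

/-- `F` is a prime filtration `I = F₀ ⊆ F₁ ⊆ ... ⊆ F_r = S` with
`F_i/F_{i-1} ≅ S/P_i` for prime ideals `P_i`. -/
def IsPrimeFiltration {S : Type*} [CommRing S] (I : Ideal S) (r : ℕ)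
    (F : Fin (r + 1) → Ideal S) (P : Fin r → Ideal S) : Prop :=
  F 0 = I ∧ F (Fin.last r) = ⊤ ∧ (∀ i : Fin r, F i.castSucc ≤ F i.succ) ∧
  ∀ i : Fin r, (P i).IsPrime ∧
    Nonempty ((↥(Submodule.map (F i.castSucc).mkQ (F i.succ))) ≃ₗ[S] (S ⧸ P i))

/-- `S/I` is clean: it has a prime filtration all of whose primes are minimal
primes of `I`. -/
def IsClean {S : Type*} [CommRing S] (I : Ideal S) : Prop :=
  ∃ (r : ℕ) (F : Fin (r + 1) → Ideal S) (P : Fin r → Ideal S),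
    IsPrimeFiltration I r F P ∧ ∀ i, P i ∈ I.minimalPrimes

/-- `S/I` is pretty clean: it has a prime filtration such that `i ≤ j` and
`P i ⊆ P j` imply `P i = P j`. -/
def IsPrettyClean {S : Type*} [CommRing S] (I : Ideal S) : Prop :=
  ∃ (r : ℕ) (F : Fin (r + 1) → Ideal S) (P : Fin r → Ideal S),
    IsPrimeFiltration I r F P ∧ ∀ i j : Fin r, i ≤ j → P i ≤ P j → P i = P j

/-- A (finitely generated) `S`-module `M` is clean: it has a filtration
`0 = M₀ ⊆ M₁ ⊆ ... ⊆ M_r = M` with `M_i/M_{i-1} ≅ S/P_i` where each `P_i` is a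
minimal prime of the support of `M`, i.e. a minimal prime over `ann M`. -/
def IsCleanModule (S : Type*) [CommRing S] (M : Type*) [AddCommGroup M] [Module S M] : Prop :=
  ∃ (r : ℕ) (F : Fin (r + 1) → Submodule S M) (P : Fin r → Ideal S),
    F 0 = ⊥ ∧ F (Fin.last r) = ⊤ ∧ (∀ i : Fin r, F i.castSucc ≤ F i.succ) ∧
    (∀ i : Fin r, (P i).IsPrime ∧
      Nonempty ((↥(F i.succ) ⧸ (Submodule.comap (F i.succ).subtype (F i.castSucc)))
        ≃ₗ[S] (S ⧸ P i))) ∧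
    ∀ i, P i ∈ (Module.annihilator S M).minimalPrimes

/-- An ideal of a polynomial ring is a monomial ideal if it is generated by monomials. -/
def IsMonomialIdeal {σ K : Type*} [CommSemiring K] (I : Ideal (MvPolynomial σ K)) : Prop :=
  ∃ G : Set (MvPolynomial σ K),
    (∀ g ∈ G, ∃ e : σ →₀ ℕ, g = MvPolynomial.monomial e 1) ∧ I = Ideal.span G

/-- The height of an ideal: the infimum of the heights of the primes containing it. -/
noncomputable def idealHeight {S : Type*} [CommRing S] (I : Ideal S) : ℕ∞ :=
  sInf {n : ℕ∞ | ∃ q : PrimeSpectrum S, I ≤ q.asIdeal ∧ Order.height q = n}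

variable {K : Type*} [Field K]

local notation "S" => MvPolynomial (Fin 4) K
local notation "m4" => (Ideal.span {(X 0 : MvPolynomial (Fin 4) K), X 1, X 2, X 3})


section Development

section Generic
variable {R : Type*} [CommRing R]

lemma quot_iso_of_colon (J : Ideal R) (u : R) :
    Nonempty ((↥(Submodule.map (Submodule.mkQ (J : Submodule R R))
        ((J ⊔ Ideal.span {u} : Ideal R) : Submodule R R))) ≃ₗ[R]
      (R ⧸ (J.colon (Ideal.span {u})))) := by
  set φ : R →ₗ[R] R ⧸ (J : Submodule R R) :=
    LinearMap.toSpanSingleton R _ (Submodule.Quotient.mk u) with hφ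
  have hker : LinearMap.ker φ = (J.colon (Ideal.span {u}) : Submodule R R) := by
    ext r
    simp only [LinearMap.mem_ker, hφ, LinearMap.toSpanSingleton_apply,
      Ideal.mem_colon_span_singleton]
    rw [← Submodule.Quotient.mk_smul, Submodule.Quotient.mk_eq_zero, smul_eq_mul]
  have hrange : Submodule.map (Submodule.mkQ (J : Submodule R R))
      ((J ⊔ Ideal.span {u} : Ideal R) : Submodule R R) = LinearMap.range φ := by
    rw [← LinearMap.span_singleton_eq_range R _ (Submodule.Quotient.mk u)]
    rw [show ((J ⊔ Ideal.span {u} : Ideal R) : Submodule R R)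
        = (J : Submodule R R) ⊔ Submodule.span R {u} from rfl,
      Submodule.map_sup, Submodule.map_span, Set.image_singleton]
    have hb : Submodule.map (Submodule.mkQ (J : Submodule R R)) (J : Submodule R R) = ⊥ := by
      rw [eq_bot_iff]
      rintro x ⟨y, hy, rfl⟩
      exact (Submodule.Quotient.mk_eq_zero _).mpr hy
    rw [hb, bot_sup_eq]
    rfl
  exact ⟨(LinearEquiv.ofEq _ _ hrange).trans <|
    ((Submodule.quotEquivOfEq _ _ hker.symm).trans (LinearMap.quotKerEquivRange φ)).symm⟩

/-- the set of first components of a list of pairs -/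
def fstSet (L : List (R × Ideal R)) : Set R := {s | ∃ p ∈ L, p.1 = s}

lemma fstSet_nil : fstSet ([] : List (R × Ideal R)) = ∅ := by
  ext s; simp [fstSet]

lemma fstSet_append (L M : List (R × Ideal R)) :
    fstSet (L ++ M) = fstSet L ∪ fstSet M := by
  ext s
  simp only [fstSet, List.mem_append, Set.mem_union, Set.mem_setOf_eq]
  constructor
  · rintro ⟨p, hp | hp, rfl⟩
    · exact Or.inl ⟨p, hp, rfl⟩
    · exact Or.inr ⟨p, hp, rfl⟩
  · rintro (⟨p, hp, rfl⟩ | ⟨p, hp, rfl⟩)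
    · exact ⟨p, Or.inl hp, rfl⟩
    · exact ⟨p, Or.inr hp, rfl⟩

lemma isClean_of_list (I : Ideal R) (L : List (R × Ideal R))
    (hmin : ∀ p ∈ L, p.2 ∈ I.minimalPrimes)
    (hcol : ∀ k (hk : k < L.length),
      (I ⊔ Ideal.span (fstSet (L.take k))).colon (Ideal.span {(L.get ⟨k, hk⟩).1})
        = (L.get ⟨k, hk⟩).2)
    (htop : I ⊔ Ideal.span (fstSet L) = ⊤) :
    IsClean I := by
  refine ⟨L.length, fun k => I ⊔ Ideal.span (fstSet (L.take k.val)),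
    fun i => (L.get i).2, ⟨?_, ?_, ?_, ?_⟩, fun i => hmin _ (L.get_mem i)⟩
  · simp [fstSet_nil]
  · simpa [Fin.last] using htop
  · intro i
    have h : L.take i.castSucc.val ⊆ L.take i.succ.val := by
      have : (i.castSucc.val + 1) = i.succ.val := rfl
      rw [← this]
      intro x hx
      rw [List.take_succ]
      exact List.mem_append_left _ hx
    refine sup_le_sup_left (Ideal.span_mono ?_) I
    rintro s ⟨p, hp, he⟩
    exact ⟨p, h hp, he⟩
  · intro i
    have hi : i.val < L.length := i.isLt
    have hstep : (I ⊔ Ideal.span (fstSet (L.take i.succ.val)))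
        = (I ⊔ Ideal.span (fstSet (L.take i.castSucc.val))) ⊔
          Ideal.span {(L.get ⟨i.val, hi⟩).1} := by
      have h1 : L.take i.succ.val = L.take i.castSucc.val ++ [L.get ⟨i.val, hi⟩] := by
        show L.take (i.val + 1) = _
        rw [List.take_succ, List.getElem?_eq_getElem hi]
        rfl
      have h2 : fstSet [L.get ⟨i.val, hi⟩] = {(L.get ⟨i.val, hi⟩).1} := by
        ext s; simp [fstSet, eq_comm]
      rw [h1, fstSet_append, Ideal.span_union, h2, sup_assoc]
    constructor
    · exact (hmin _ (L.get_mem i)).1.1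
    · show Nonempty ((↥(Submodule.map (Submodule.mkQ
          ((I ⊔ Ideal.span (fstSet (L.take i.castSucc.val)) : Ideal R) : Submodule R R))
          ((I ⊔ Ideal.span (fstSet (L.take i.succ.val)) : Ideal R) : Submodule R R))) ≃ₗ[R]
          (R ⧸ (L.get ⟨i.val, hi⟩).2))
      rw [← hcol i.val hi]
      have := quot_iso_of_colon (I ⊔ Ideal.span (fstSet (L.take i.castSucc.val)))
        (L.get ⟨i.val, hi⟩).1
      rwa [← hstep] at this
end Generic


lemma flat_take {α : Type*} (f : ℕ → List α) :
    ∀ (M : List ℕ) (k : ℕ) (hk : k < (M.flatMap f).length),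
    ∃ M1 b M2 i, ∃ hi : i < (f b).length, M = M1 ++ b :: M2 ∧
      (M.flatMap f).get ⟨k, hk⟩ = (f b).get ⟨i, hi⟩ ∧
      (M.flatMap f).take k = M1.flatMap f ++ (f b).take i := by
  intro M
  induction M with
  | nil => intro k hk; simp at hk
  | cons m M' ih =>
    intro k hk
    have hfl : (m :: M').flatMap f = f m ++ M'.flatMap f := by simp
    by_cases hlt : k < (f m).length
    · refine ⟨[], m, M', k, hlt, by simp, ?_, ?_⟩
      · show ((m :: M').flatMap f)[k] = (f m)[k]
        rw [List.getElem_of_eq hfl]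
        exact List.getElem_append_left hlt
      · rw [List.flatMap_cons, List.take_append,
          show k - (f m).length = 0 by omega]
        simp
    · push_neg at hlt
      have hk' : k - (f m).length < (M'.flatMap f).length := by
        rw [List.flatMap_cons, List.length_append] at hk
        omega
      obtain ⟨M1, b, M2, i, hi, hM, hget, htake⟩ := ih (k - (f m).length) hk'
      refine ⟨m :: M1, b, M2, i, hi, by rw [List.cons_append, hM], ?_, ?_⟩
      · show ((m :: M').flatMap f)[k] = (f b)[i]
        rw [List.getElem_of_eq hfl, List.getElem_append_right hlt]
        exact hget
      · rw [List.flatMap_cons, List.take_append,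
          List.take_of_length_le hlt, htake, List.flatMap_cons, List.append_assoc]

lemma range_flat_take {α : Type*} (f : ℕ → List α) (B k : ℕ)
    (hk : k < ((List.range B).flatMap f).length) :
    ∃ b, b < B ∧ ∃ i, ∃ hi : i < (f b).length,
      ((List.range B).flatMap f).get ⟨k, hk⟩ = (f b).get ⟨i, hi⟩ ∧
      ((List.range B).flatMap f).take k = (List.range b).flatMap f ++ (f b).take i := by
  obtain ⟨M1, b, M2, i, hi, hM, hget, htake⟩ := flat_take f (List.range B) k hk
  have hbB : b < B := by
    have : b ∈ List.range B := by rw [hM]; exact List.mem_append_right _ (List.mem_cons_self)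
    exact List.mem_range.mp this
  have hM1 : M1 = List.range b := by
    have hlen : M1.length < B := by
      have := congrArg List.length hM
      simp at this
      omega
    have hb : b = M1.length := by
      have := congrArg (fun l => l[M1.length]?) hM
      simp only [List.getElem?_append_right le_rfl, Nat.sub_self] at this
      rw [List.getElem?_range hlen] at this
      simpa using this.symm
    have := congrArg (List.take M1.length) hM
    rw [List.take_range, List.take_append, Nat.sub_self, List.take_zero,
      List.take_of_length_le le_rfl, List.append_nil] at this
    rw [← this, hb, Nat.min_eq_left (by omega)]
  exact ⟨b, hbB, i, hi, hget, by rw [htake, hM1]⟩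

lemma mem_range_flatMap {α : Type*} (f : ℕ → List α) (b : ℕ) {p : α} :
    p ∈ (List.range b).flatMap f ↔ ∃ β', β' < b ∧ p ∈ f β' := by
  simp [List.mem_flatMap, List.mem_range]

lemma nodup_take_ne {α : Type*} {l : List α} (h : l.Nodup) {i : ℕ} (hi : i < l.length)
    {p : α} (hp : p ∈ l.take i) : p ≠ l.get ⟨i, hi⟩ := by
  rw [List.mem_take_iff_getElem] at hp
  obtain ⟨j, hj, rfl⟩ := hp
  intro he
  have : j = i := (h.getElem_inj_iff).mp he
  omega

/-- exponent quadruple as a finsupp -/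
noncomputable def expOf (a b c d : ℕ) : Fin 4 →₀ ℕ :=
  Finsupp.equivFunOnFinite.symm ![a, b, c, d]

/-- the monomial x^a y^b z^c w^d -/
noncomputable def mn (a b c d : ℕ) : MvPolynomial (Fin 4) K :=
  monomial (expOf a b c d) 1

@[simp] lemma expOf_apply_0 (a b c d : ℕ) : expOf a b c d 0 = a := rfl
@[simp] lemma expOf_apply_1 (a b c d : ℕ) : expOf a b c d 1 = b := rfl
@[simp] lemma expOf_apply_2 (a b c d : ℕ) : expOf a b c d 2 = c := rfl
@[simp] lemma expOf_apply_3 (a b c d : ℕ) : expOf a b c d 3 = d := rfl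

lemma expOf_add (a b c d a' b' c' d' : ℕ) :
    expOf a b c d + expOf a' b' c' d' = expOf (a + a') (b + b') (c + c') (d + d') := by
  ext i
  fin_cases i <;> rfl

lemma eq_expOf (e : Fin 4 →₀ ℕ) : e = expOf (e 0) (e 1) (e 2) (e 3) := by
  ext i
  fin_cases i <;> rfl

lemma expOf_inj {a b c d a' b' c' d' : ℕ}
    (h : expOf a b c d = expOf a' b' c' d') : a = a' ∧ b = b' ∧ c = c' ∧ d = d' :=
  ⟨DFunLike.congr_fun h 0, DFunLike.congr_fun h 1,
   DFunLike.congr_fun h 2, DFunLike.congr_fun h 3⟩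

lemma mn_inj {a b c d a' b' c' d' : ℕ} (h : (mn a b c d : S) = mn a' b' c' d') :
    a = a' ∧ b = b' ∧ c = c' ∧ d = d' :=
  expOf_inj (monomial_left_injective (one_ne_zero (α := K)) h)

lemma mn_mul (a b c d a' b' c' d' : ℕ) :
    (mn a b c d : S) * mn a' b' c' d' = mn (a + a') (b + b') (c + c') (d + d') := by
  rw [mn, mn, mn, monomial_mul, expOf_add, one_mul]

lemma X_eq_mn_0 : (X 0 : S) = mn 1 0 0 0 := by
  rw [mn, show expOf 1 0 0 0 = Finsupp.single 0 1 by ext i; fin_cases i <;> simp]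
  rfl

lemma X_eq_mn_1 : (X 1 : S) = mn 0 1 0 0 := by
  rw [mn, show expOf 0 1 0 0 = Finsupp.single 1 1 by ext i; fin_cases i <;> simp]
  rfl

lemma X_eq_mn_2 : (X 2 : S) = mn 0 0 1 0 := by
  rw [mn, show expOf 0 0 1 0 = Finsupp.single 2 1 by ext i; fin_cases i <;> simp]
  rfl

lemma X_eq_mn_3 : (X 3 : S) = mn 0 0 0 1 := by
  rw [mn, show expOf 0 0 0 1 = Finsupp.single 3 1 by ext i; fin_cases i <;> simp]
  rfl

lemma one_eq_mn : (1 : S) = mn 0 0 0 0 := by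
  rw [mn]; rw [show expOf 0 0 0 0 = 0 by ext i; fin_cases i <;> rfl]
  rw [show (monomial (0 : Fin 4 →₀ ℕ) (1:K)) = C 1 from congrFun monomial_zero' 1, C_1]


lemma Xpow_eq_mn_0 (n : ℕ) : (X 0 : S) ^ n = mn n 0 0 0 := by
  rw [mn, show expOf n 0 0 0 = Finsupp.single 0 n by ext i; fin_cases i <;> simp,
    X_pow_eq_monomial]

lemma Xpow_eq_mn_1 (n : ℕ) : (X 1 : S) ^ n = mn 0 n 0 0 := by
  rw [mn, show expOf 0 n 0 0 = Finsupp.single 1 n by ext i; fin_cases i <;> simp,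
    X_pow_eq_monomial]

lemma Xpow_eq_mn_2 (n : ℕ) : (X 2 : S) ^ n = mn 0 0 n 0 := by
  rw [mn, show expOf 0 0 n 0 = Finsupp.single 2 n by ext i; fin_cases i <;> simp,
    X_pow_eq_monomial]

lemma Xpow_eq_mn_3 (n : ℕ) : (X 3 : S) ^ n = mn 0 0 0 n := by
  rw [mn, show expOf 0 0 0 n = Finsupp.single 3 n by ext i; fin_cases i <;> simp,
    X_pow_eq_monomial]

lemma key1 {G : Set S} (hG : ∀ g ∈ G, ∃ e : Fin 4 →₀ ℕ, g = monomial e 1) {f : S}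
    (hf : f ∈ Ideal.span G) :
    ∀ e ∈ f.support, ∃ e₀ e', (monomial e₀ (1 : K)) ∈ G ∧ e = e₀ + e' := by
  induction hf using Submodule.span_induction with
  | mem g hg =>
    obtain ⟨e₀, rfl⟩ := hG g hg
    intro e he
    have he := Finset.mem_singleton.mp (support_monomial_subset he)
    exact ⟨e₀, 0, hg, by rw [he, add_zero]⟩
  | zero => simp
  | add x y _ _ hx hy =>
    intro e he
    rcases Finset.mem_union.mp (support_add he) with h | h
    · exact hx e h
    · exact hy e h
  | smul r x _ hx =>
    intro e he
    rw [smul_eq_mul] at he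
    rcases Finset.mem_add.mp (support_mul _ _ he) with ⟨e₁, h₁, e₂, h₂, rfl⟩
    obtain ⟨e₀, e', hG0, rfl⟩ := hx e₂ h₂
    exact ⟨e₀, e₁ + e', hG0, add_left_comm _ _ _⟩

/-- a polynomial all of whose monomials lie in an ideal lies in the ideal -/
lemma mem_of_support {A : Ideal S} {f : S}
    (h : ∀ e ∈ f.support, (monomial e (1 : K)) ∈ A) : f ∈ A := by
  have h2 : (∑ v ∈ f.support, (monomial v (coeff v f) : S)) ∈ A := by
    refine Ideal.sum_mem _ fun e he => ?_
    have : (monomial e (coeff e f) : S) = C (coeff e f) * monomial e 1 := by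
      rw [C_mul_monomial, mul_one]
    rw [this]
    exact Ideal.mul_mem_left _ _ (h e he)
  rwa [← f.as_sum] at h2

/-- monomial span closed under taking monomials of members -/
lemma mono_closed {G : Set S} (hG : ∀ g ∈ G, ∃ e : Fin 4 →₀ ℕ, g = monomial e 1) {f : S}
    (hf : f ∈ Ideal.span G) {e : Fin 4 →₀ ℕ} (he : e ∈ f.support) :
    (monomial e (1 : K)) ∈ Ideal.span G := by
  obtain ⟨e₀, e', hmem, rfl⟩ := key1 hG hf e he
  rw [← one_mul (1 : K), ← monomial_mul, mul_comm]
  exact Ideal.mul_mem_left _ _ (Ideal.subset_span hmem)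

noncomputable def P1 (K : Type*) [Field K] : Ideal (MvPolynomial (Fin 4) K) := Ideal.span {X 0, X 1}
noncomputable def P2 (K : Type*) [Field K] : Ideal (MvPolynomial (Fin 4) K) := Ideal.span {X 0, X 2}
noncomputable def P3 (K : Type*) [Field K] : Ideal (MvPolynomial (Fin 4) K) := Ideal.span {X 0, X 3}

lemma mem_P1_of {e0 e1 e2 e3 : ℕ} (h : 0 < e0 ∨ 0 < e1) : (mn e0 e1 e2 e3 : S) ∈ P1 K := by
  rcases h with h | h
  · rw [show (mn e0 e1 e2 e3 : S) = mn (e0-1) e1 e2 e3 * mn 1 0 0 0 by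
      rw [mn_mul]; congr 1 <;> omega, ← X_eq_mn_0]
    exact Ideal.mul_mem_left _ _ (Ideal.subset_span (by simp))
  · rw [show (mn e0 e1 e2 e3 : S) = mn e0 (e1-1) e2 e3 * mn 0 1 0 0 by
      rw [mn_mul]; congr 1 <;> omega, ← X_eq_mn_1]
    exact Ideal.mul_mem_left _ _ (Ideal.subset_span (by simp))

lemma mem_P2_of {e0 e1 e2 e3 : ℕ} (h : 0 < e0 ∨ 0 < e2) : (mn e0 e1 e2 e3 : S) ∈ P2 K := by
  rcases h with h | h
  · rw [show (mn e0 e1 e2 e3 : S) = mn (e0-1) e1 e2 e3 * mn 1 0 0 0 by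
      rw [mn_mul]; congr 1 <;> omega, ← X_eq_mn_0]
    exact Ideal.mul_mem_left _ _ (Ideal.subset_span (by simp))
  · rw [show (mn e0 e1 e2 e3 : S) = mn e0 e1 (e2-1) e3 * mn 0 0 1 0 by
      rw [mn_mul]; congr 1 <;> omega, ← X_eq_mn_2]
    exact Ideal.mul_mem_left _ _ (Ideal.subset_span (by simp))

lemma mem_P3_of {e0 e1 e2 e3 : ℕ} (h : 0 < e0 ∨ 0 < e3) : (mn e0 e1 e2 e3 : S) ∈ P3 K := by
  rcases h with h | h
  · rw [show (mn e0 e1 e2 e3 : S) = mn (e0-1) e1 e2 e3 * mn 1 0 0 0 by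
      rw [mn_mul]; congr 1 <;> omega, ← X_eq_mn_0]
    exact Ideal.mul_mem_left _ _ (Ideal.subset_span (by simp))
  · rw [show (mn e0 e1 e2 e3 : S) = mn e0 e1 e2 (e3-1) * mn 0 0 0 1 by
      rw [mn_mul]; congr 1 <;> omega, ← X_eq_mn_3]
    exact Ideal.mul_mem_left _ _ (Ideal.subset_span (by simp))

/-- Context: a monomial ideal whose monomial membership is controlled by three
upward-closed predicates. -/
structure Ctx (K : Type*) [Field K] where
  I : Ideal (MvPolynomial (Fin 4) K)
  GI : Set (MvPolynomial (Fin 4) K)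
  hGI : ∀ g ∈ GI, ∃ e : Fin 4 →₀ ℕ, g = monomial e 1
  hIspan : I = Ideal.span GI
  q1 : ℕ → ℕ → Prop
  q2 : ℕ → ℕ → Prop
  q3 : ℕ → ℕ → Prop
  m1 : ∀ a b s t, q1 a b → q1 (a + s) (b + t)
  m2 : ∀ a c s t, q2 a c → q2 (a + s) (c + t)
  m3 : ∀ a d s t, q3 a d → q3 (a + s) (d + t)
  N : ℕ
  h1x : q1 N 0
  h1y : q1 0 N
  h2x : q2 N 0
  h2z : q2 0 N
  h3x : q3 N 0
  h3w : q3 0 N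
  memI : ∀ a b c d, (mn a b c d ∈ I ↔ q1 a b ∧ q2 a c ∧ q3 a d)

namespace Ctx

variable {K : Type*} [Field K] (T : Ctx K)

lemma q1_le {a b a' b' : ℕ} (h : T.q1 a b) (ha : a ≤ a') (hb : b ≤ b') : T.q1 a' b' := by
  have := T.m1 a b (a' - a) (b' - b) h
  rwa [Nat.add_sub_cancel' ha, Nat.add_sub_cancel' hb] at this

lemma q2_le {a c a' c' : ℕ} (h : T.q2 a c) (ha : a ≤ a') (hc : c ≤ c') : T.q2 a' c' := by
  have := T.m2 a c (a' - a) (c' - c) h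
  rwa [Nat.add_sub_cancel' ha, Nat.add_sub_cancel' hc] at this

lemma q3_le {a d a' d' : ℕ} (h : T.q3 a d) (ha : a ≤ a') (hd : d ≤ d') : T.q3 a' d' := by
  have := T.m3 a d (a' - a) (d' - d) h
  rwa [Nat.add_sub_cancel' ha, Nat.add_sub_cancel' hd] at this

noncomputable def cA (a : ℕ) : ℕ := sInf {c | T.q2 a c}
noncomputable def dA (a : ℕ) : ℕ := sInf {d | T.q3 a d}

lemma cA_mem (a : ℕ) : T.q2 a (T.cA a) :=
  Nat.sInf_mem ⟨T.N, T.q2_le T.h2z (Nat.zero_le a) le_rfl⟩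

lemma cA_le {a c : ℕ} (h : T.q2 a c) : T.cA a ≤ c := Nat.sInf_le h

lemma q2_iff {a c : ℕ} : T.q2 a c ↔ T.cA a ≤ c :=
  ⟨T.cA_le, fun h => T.q2_le (T.cA_mem a) le_rfl h⟩

lemma cA_anti {a a' : ℕ} (h : a ≤ a') : T.cA a' ≤ T.cA a :=
  T.cA_le (T.q2_le (T.cA_mem a) h le_rfl)

lemma dA_mem (a : ℕ) : T.q3 a (T.dA a) :=
  Nat.sInf_mem ⟨T.N, T.q3_le T.h3w (Nat.zero_le a) le_rfl⟩

lemma dA_le {a d : ℕ} (h : T.q3 a d) : T.dA a ≤ d := Nat.sInf_le h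

lemma q3_iff {a d : ℕ} : T.q3 a d ↔ T.dA a ≤ d :=
  ⟨T.dA_le, fun h => T.q3_le (T.dA_mem a) le_rfl h⟩

lemma dA_anti {a a' : ℕ} (h : a ≤ a') : T.dA a' ≤ T.dA a :=
  T.dA_le (T.q3_le (T.dA_mem a) h le_rfl)

lemma bnd1 {a b : ℕ} (h : ¬ T.q1 a b) : a < T.N ∧ b < T.N := by
  constructor
  · by_contra hc
    exact h (T.q1_le T.h1x (by omega) (Nat.zero_le b))
  · by_contra hc
    exact h (T.q1_le T.h1y (Nat.zero_le a) (by omega))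

lemma bnd2 {a c : ℕ} (h : ¬ T.q2 a c) : a < T.N ∧ c < T.N := by
  constructor
  · by_contra hc
    exact h (T.q2_le T.h2x (by omega) (Nat.zero_le c))
  · by_contra hc
    exact h (T.q2_le T.h2z (Nat.zero_le a) (by omega))

lemma bnd3 {a d : ℕ} (h : ¬ T.q3 a d) : a < T.N ∧ d < T.N := by
  constructor
  · by_contra hc
    exact h (T.q3_le T.h3x (by omega) (Nat.zero_le d))
  · by_contra hc
    exact h (T.q3_le T.h3w (Nat.zero_le a) (by omega))

/-- stage-1 generator -/
noncomputable def g1 (a b : ℕ) : MvPolynomial (Fin 4) K := mn a b (T.cA a) (T.dA a)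
/-- stage-2 generator -/
noncomputable def g2 (a c : ℕ) : MvPolynomial (Fin 4) K := mn a 0 c (T.dA a)
/-- stage-3 generator -/
noncomputable def g3 (_T : Ctx K) (a d : ℕ) : MvPolynomial (Fin 4) K := mn a 0 0 d

/-- membership of a monomial in `I + span(prior generators)` -/
lemma memJ (Pl : List (MvPolynomial (Fin 4) K × Ideal (MvPolynomial (Fin 4) K)))
    (Hmon : ∀ p ∈ Pl, ∃ a' b' c' d', p.1 = (mn a' b' c' d' : MvPolynomial (Fin 4) K))
    (A B C D : ℕ) :
    (mn A B C D : MvPolynomial (Fin 4) K) ∈ T.I ⊔ Ideal.span (fstSet Pl) ↔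
      (T.q1 A B ∧ T.q2 A C ∧ T.q3 A D) ∨ ∃ p ∈ Pl, ∃ a' b' c' d',
        p.1 = (mn a' b' c' d' : MvPolynomial (Fin 4) K) ∧
          a' ≤ A ∧ b' ≤ B ∧ c' ≤ C ∧ d' ≤ D := by
  constructor
  · intro hm
    have hspan : (mn A B C D : MvPolynomial (Fin 4) K) ∈
        Ideal.span (T.GI ∪ fstSet Pl) := by
      rwa [Ideal.span_union, ← T.hIspan]
    have hGall : ∀ g ∈ T.GI ∪ fstSet Pl, ∃ e : Fin 4 →₀ ℕ, g = monomial e 1 := by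
      rintro g (hg | hg)
      · exact T.hGI g hg
      · obtain ⟨p, hp, rfl⟩ := hg
        obtain ⟨a', b', c', d', he⟩ := Hmon p hp
        exact ⟨_, he⟩
    have hsupp : expOf A B C D ∈ (mn A B C D : MvPolynomial (Fin 4) K).support := by
      rw [MvPolynomial.mem_support_iff, mn, coeff_monomial, if_pos rfl]
      exact one_ne_zero
    obtain ⟨e₀, e', hmem, hadd⟩ := key1 hGall hspan _ hsupp
    rcases hmem with hg | hg
    · left
      have : (mn A B C D : MvPolynomial (Fin 4) K) ∈ T.I := by
        rw [mn, hadd, ← one_mul (1 : K), ← monomial_mul, mul_comm, T.hIspan]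
        exact Ideal.mul_mem_left _ _ (Ideal.subset_span hg)
      rw [T.memI] at this
      exact this
    · right
      obtain ⟨p, hp, hpe⟩ := hg
      obtain ⟨a', b', c', d', he⟩ := Hmon p hp
      have he₀ : e₀ = expOf a' b' c' d' := by
        have := he.symm.trans hpe
        rw [mn] at this
        exact (monomial_left_injective (one_ne_zero (α := K)) this).symm
      refine ⟨p, hp, a', b', c', d', he, ?_, ?_, ?_, ?_⟩ <;>
      · have h0 := DFunLike.congr_fun hadd
        rw [he₀] at h0
        first
        | (have := h0 0; simp [Finsupp.add_apply] at this; omega)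
        | (have := h0 1; simp [Finsupp.add_apply] at this; omega)
        | (have := h0 2; simp [Finsupp.add_apply] at this; omega)
        | (have := h0 3; simp [Finsupp.add_apply] at this; omega)
  · rintro (h | ⟨p, hp, a', b', c', d', he, ha, hb, hc, hd⟩)
    · exact Submodule.mem_sup_left ((T.memI A B C D).mpr h)
    · have : (mn A B C D : MvPolynomial (Fin 4) K)
          = mn (A - a') (B - b') (C - c') (D - d') * p.1 := by
        rw [he, mn_mul]
        congr 1 <;> omega
      rw [this]
      exact Ideal.mul_mem_left _ _
        (Submodule.mem_sup_right (Ideal.subset_span ⟨p, hp, rfl⟩))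

/-- The main workhorse: to prove `J : u ≤ P` it is enough to check it on monomials. -/
lemma colon_sub (Pl : List (MvPolynomial (Fin 4) K × Ideal (MvPolynomial (Fin 4) K)))
    (Hmon : ∀ p ∈ Pl, ∃ a' b' c' d', p.1 = (mn a' b' c' d' : MvPolynomial (Fin 4) K))
    (A B C D : ℕ) (P : Ideal (MvPolynomial (Fin 4) K))
    (key : ∀ e0 e1 e2 e3 : ℕ, (mn (e0 + A) (e1 + B) (e2 + C) (e3 + D) :
        MvPolynomial (Fin 4) K) ∈ T.I ⊔ Ideal.span (fstSet Pl) →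
        (mn e0 e1 e2 e3 : MvPolynomial (Fin 4) K) ∈ P) :
    (T.I ⊔ Ideal.span (fstSet Pl)).colon (Ideal.span {(mn A B C D :
      MvPolynomial (Fin 4) K)}) ≤ P := by
  intro g hg
  rw [Ideal.mem_colon_span_singleton] at hg
  have hGall : ∀ g' ∈ T.GI ∪ fstSet Pl, ∃ e : Fin 4 →₀ ℕ, g' = monomial e 1 := by
    rintro g' (hg' | hg')
    · exact T.hGI g' hg'
    · obtain ⟨p, hp, rfl⟩ := hg'
      obtain ⟨a', b', c', d', he⟩ := Hmon p hp
      exact ⟨_, he⟩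
  have hJ : T.I ⊔ Ideal.span (fstSet Pl) = Ideal.span (T.GI ∪ fstSet Pl) := by
    rw [Ideal.span_union, ← T.hIspan]
  apply mem_of_support
  intro e he
  have hsup : e + expOf A B C D ∈ (g * mn A B C D).support := by
    rw [mn, MvPolynomial.mem_support_iff, coeff_mul_monomial, mul_one]
    exact MvPolynomial.mem_support_iff.mp he
  have hmm : (monomial (e + expOf A B C D) (1 : K)) ∈ Ideal.span (T.GI ∪ fstSet Pl) :=
    mono_closed hGall (hJ ▸ hg) hsup
  have key' := key (e 0) (e 1) (e 2) (e 3)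
  rw [show (mn (e 0 + A) (e 1 + B) (e 2 + C) (e 3 + D) : MvPolynomial (Fin 4) K)
      = monomial (e + expOf A B C D) 1 by
    rw [mn]; congr 1; rw [← expOf_add, ← eq_expOf]] at key'
  have := key' (hJ ▸ hmm)
  rwa [show (mn (e 0) (e 1) (e 2) (e 3) : MvPolynomial (Fin 4) K) = monomial e 1 by
    rw [mn, ← eq_expOf]] at this

end Ctx

namespace Ctx

variable {K : Type*} [Field K] (T : Ctx K)

lemma step1 (Pl : List (MvPolynomial (Fin 4) K × Ideal (MvPolynomial (Fin 4) K)))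
    (a b : ℕ) (hab : ¬ T.q1 a b)
    (Hlo : ∀ a' b', ¬ T.q1 a' b' → a + b < a' + b' → (T.g1 a' b', P1 K) ∈ Pl)
    (Hhi : ∀ p ∈ Pl, ∃ a' b', ¬ T.q1 a' b' ∧ p.1 = T.g1 a' b' ∧ a + b ≤ a' + b'
        ∧ ¬(a' = a ∧ b' = b)) :
    (T.I ⊔ Ideal.span (fstSet Pl)).colon (Ideal.span {T.g1 a b}) = P1 K := by
  have Hmon : ∀ p ∈ Pl, ∃ a' b' c' d',
      p.1 = (mn a' b' c' d' : MvPolynomial (Fin 4) K) := by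
    intro p hp
    obtain ⟨a', b', _, he, _⟩ := Hhi p hp
    exact ⟨_, _, _, _, he⟩
  apply le_antisymm
  · apply T.colon_sub Pl Hmon a b (T.cA a) (T.dA a)
    intro e0 e1 e2 e3 hmem
    by_cases h0 : 0 < e0 ∨ 0 < e1
    · exact mem_P1_of h0
    push_neg at h0
    obtain ⟨rfl, rfl⟩ : e0 = 0 ∧ e1 = 0 := by omega
    exfalso
    rcases (T.memJ Pl Hmon _ _ _ _).mp hmem with ⟨hq1, _, _⟩ | ⟨p, hp, a', b', c', d', he, ha, hb, _, _⟩
    · exact hab (by simpa using hq1)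
    · obtain ⟨a'', b'', hq'', he'', hd'', hne''⟩ := Hhi p hp
      rw [he''] at he
      obtain ⟨h1, h2, -, -⟩ := mn_inj he
      omega
  · rw [P1, Ideal.span_le]
    rintro x hx
    simp only [Set.mem_insert_iff, Set.mem_singleton_iff] at hx
    rcases hx with rfl | rfl
    · rw [SetLike.mem_coe, Ideal.mem_colon_span_singleton, X_eq_mn_0, g1, mn_mul]
      simp only [Nat.zero_add]
      by_cases hq : T.q1 (1 + a) b
      · refine Submodule.mem_sup_left ((T.memI _ _ _ _).mpr ⟨hq, ?_, ?_⟩)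
        · exact T.q2_le (T.cA_mem a) (by omega) (by omega)
        · exact T.q3_le (T.dA_mem a) (by omega) (by omega)
      · refine (T.memJ Pl Hmon _ _ _ _).mpr (Or.inr ⟨(T.g1 (1+a) b, P1 K),
          Hlo (1+a) b hq (by omega), 1+a, b, T.cA (1+a), T.dA (1+a), rfl,
          le_rfl, le_rfl, T.cA_anti (by omega), T.dA_anti (by omega)⟩)
    · rw [SetLike.mem_coe, Ideal.mem_colon_span_singleton, X_eq_mn_1, g1, mn_mul]
      simp only [Nat.zero_add]
      by_cases hq : T.q1 a (1 + b)
      · refine Submodule.mem_sup_left ((T.memI _ _ _ _).mpr ⟨hq, ?_, ?_⟩)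
        · exact T.q2_le (T.cA_mem a) (by omega) (by omega)
        · exact T.q3_le (T.dA_mem a) (by omega) (by omega)
      · refine (T.memJ Pl Hmon _ _ _ _).mpr (Or.inr ⟨(T.g1 a (1+b), P1 K),
          Hlo a (1+b) hq (by omega), a, 1+b, T.cA a, T.dA a, rfl,
          le_rfl, le_rfl, T.cA_anti (by omega), T.dA_anti (by omega)⟩)

lemma step2 (Pl : List (MvPolynomial (Fin 4) K × Ideal (MvPolynomial (Fin 4) K)))
    (a c : ℕ) (hac : ¬ T.q2 a c)
    (Hlo1 : ∀ a' b', ¬ T.q1 a' b' → (T.g1 a' b', P1 K) ∈ Pl)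
    (Hlo2 : ∀ a' c', ¬ T.q2 a' c' → a + c < a' + c' → (T.g2 a' c', P2 K) ∈ Pl)
    (Hhi : ∀ p ∈ Pl, (∃ a' b', ¬ T.q1 a' b' ∧ p.1 = T.g1 a' b') ∨
        (∃ a' c', ¬ T.q2 a' c' ∧ p.1 = T.g2 a' c' ∧ a + c ≤ a' + c' ∧ ¬(a' = a ∧ c' = c))) :
    (T.I ⊔ Ideal.span (fstSet Pl)).colon (Ideal.span {T.g2 a c}) = P2 K := by
  have Hmon : ∀ p ∈ Pl, ∃ a' b' c' d',
      p.1 = (mn a' b' c' d' : MvPolynomial (Fin 4) K) := by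
    intro p hp
    rcases Hhi p hp with ⟨a', b', _, he⟩ | ⟨a', c', _, he, _⟩ <;> exact ⟨_, _, _, _, he⟩
  apply le_antisymm
  · apply T.colon_sub Pl Hmon a 0 c (T.dA a)
    intro e0 e1 e2 e3 hmem
    by_cases h0 : 0 < e0 ∨ 0 < e2
    · exact mem_P2_of h0
    push_neg at h0
    obtain ⟨rfl, rfl⟩ : e0 = 0 ∧ e2 = 0 := by omega
    exfalso
    rcases (T.memJ Pl Hmon _ _ _ _).mp hmem with ⟨_, hq2, _⟩ | ⟨p, hp, a', b', c', d', he, ha, hb, hc, hd⟩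
    · exact hac (by simpa using hq2)
    · rcases Hhi p hp with ⟨a'', b'', hq'', he''⟩ | ⟨a'', c'', hq'', he'', hd'', hne''⟩
      · rw [he''] at he
        obtain ⟨h1, -, h3, -⟩ := mn_inj he
        -- a'' ≤ a, cA a'' ≤ c : contradiction with ¬ q2 a c since q2 a'' (cA a'')
        exact hac (T.q2_le (T.cA_mem a'') (by omega) (by omega))
      · rw [he''] at he
        obtain ⟨h1, -, h3, -⟩ := mn_inj he
        omega
  · rw [P2, Ideal.span_le]
    rintro x hx
    simp only [Set.mem_insert_iff, Set.mem_singleton_iff] at hx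
    rcases hx with rfl | rfl
    · rw [SetLike.mem_coe, Ideal.mem_colon_span_singleton, X_eq_mn_0, g2, mn_mul]
      simp only [Nat.zero_add]
      by_cases hq : T.q2 (1 + a) c
      · by_cases hq1 : T.q1 (1 + a) 0
        · refine Submodule.mem_sup_left ((T.memI _ _ _ _).mpr ⟨hq1, hq, ?_⟩)
          exact T.q3_le (T.dA_mem a) (by omega) (by omega)
        · refine (T.memJ Pl Hmon _ _ _ _).mpr (Or.inr ⟨(T.g1 (1+a) 0, P1 K),
            Hlo1 (1+a) 0 hq1, 1+a, 0+0, T.cA (1+a), T.dA (1+a), rfl,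
            le_rfl, le_rfl, T.cA_le hq, T.dA_anti (by omega)⟩)
      · refine (T.memJ Pl Hmon _ _ _ _).mpr (Or.inr ⟨(T.g2 (1+a) c, P2 K),
          Hlo2 (1+a) c hq (by omega), 1+a, 0, c, T.dA (1+a), rfl,
          le_rfl, le_rfl, le_rfl, T.dA_anti (by omega)⟩)
    · rw [SetLike.mem_coe, Ideal.mem_colon_span_singleton, X_eq_mn_2, g2, mn_mul]
      simp only [Nat.zero_add]
      by_cases hq : T.q2 a (1 + c)
      · by_cases hq1 : T.q1 a 0
        · refine Submodule.mem_sup_left ((T.memI _ _ _ _).mpr ⟨hq1, hq, ?_⟩)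
          exact T.q3_le (T.dA_mem a) (by omega) (by omega)
        · refine (T.memJ Pl Hmon _ _ _ _).mpr (Or.inr ⟨(T.g1 a 0, P1 K),
            Hlo1 a 0 hq1, a, 0+0, T.cA a, T.dA a, rfl,
            le_rfl, le_rfl, T.cA_le hq, T.dA_anti (by omega)⟩)
      · refine (T.memJ Pl Hmon _ _ _ _).mpr (Or.inr ⟨(T.g2 a (1+c), P2 K),
          Hlo2 a (1+c) hq (by omega), a, 0, 1+c, T.dA a, rfl,
          le_rfl, le_rfl, le_rfl, T.dA_anti (by omega)⟩)

lemma step3 (Pl : List (MvPolynomial (Fin 4) K × Ideal (MvPolynomial (Fin 4) K)))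
    (a d : ℕ) (had : ¬ T.q3 a d)
    (Hlo1 : ∀ a' b', ¬ T.q1 a' b' → (T.g1 a' b', P1 K) ∈ Pl)
    (Hlo2 : ∀ a' c', ¬ T.q2 a' c' → (T.g2 a' c', P2 K) ∈ Pl)
    (Hlo3 : ∀ a' d', ¬ T.q3 a' d' → a + d < a' + d' → (T.g3 a' d', P3 K) ∈ Pl)
    (Hhi : ∀ p ∈ Pl, (∃ a' b', ¬ T.q1 a' b' ∧ p.1 = T.g1 a' b') ∨
        (∃ a' c', ¬ T.q2 a' c' ∧ p.1 = T.g2 a' c') ∨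
        (∃ a' d', ¬ T.q3 a' d' ∧ p.1 = T.g3 a' d' ∧ a + d ≤ a' + d' ∧ ¬(a' = a ∧ d' = d))) :
    (T.I ⊔ Ideal.span (fstSet Pl)).colon (Ideal.span {T.g3 a d}) = P3 K := by
  have Hmon : ∀ p ∈ Pl, ∃ a' b' c' d',
      p.1 = (mn a' b' c' d' : MvPolynomial (Fin 4) K) := by
    intro p hp
    rcases Hhi p hp with ⟨a', b', _, he⟩ | ⟨a', c', _, he⟩ | ⟨a', d', _, he, _⟩ <;>
      exact ⟨_, _, _, _, he⟩
  apply le_antisymm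
  · apply T.colon_sub Pl Hmon a 0 0 d
    intro e0 e1 e2 e3 hmem
    by_cases h0 : 0 < e0 ∨ 0 < e3
    · exact mem_P3_of h0
    push_neg at h0
    obtain ⟨rfl, rfl⟩ : e0 = 0 ∧ e3 = 0 := by omega
    exfalso
    rcases (T.memJ Pl Hmon _ _ _ _).mp hmem with ⟨_, _, hq3⟩ | ⟨p, hp, a', b', c', d', he, ha, hb, hc, hd⟩
    · exact had (by simpa using hq3)
    · rcases Hhi p hp with ⟨a'', b'', hq'', he''⟩ | ⟨a'', c'', hq'', he''⟩ |
        ⟨a'', d'', hq'', he'', hd'', hne''⟩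
      · rw [he''] at he
        obtain ⟨h1, -, -, h4⟩ := mn_inj he
        exact had (T.q3_le (T.dA_mem a'') (by omega) (by omega))
      · rw [he''] at he
        obtain ⟨h1, -, -, h4⟩ := mn_inj he
        exact had (T.q3_le (T.dA_mem a'') (by omega) (by omega))
      · rw [he''] at he
        obtain ⟨h1, -, -, h4⟩ := mn_inj he
        omega
  · rw [P3, Ideal.span_le]
    rintro x hx
    simp only [Set.mem_insert_iff, Set.mem_singleton_iff] at hx
    rcases hx with rfl | rfl
    · rw [SetLike.mem_coe, Ideal.mem_colon_span_singleton, X_eq_mn_0, g3, mn_mul]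
      simp only [Nat.zero_add]
      by_cases hq : T.q3 (1 + a) d
      · by_cases hq2 : T.q2 (1 + a) 0
        · by_cases hq1 : T.q1 (1 + a) 0
          · exact Submodule.mem_sup_left ((T.memI _ _ _ _).mpr ⟨hq1, hq2, hq⟩)
          · refine (T.memJ Pl Hmon _ _ _ _).mpr (Or.inr ⟨(T.g1 (1+a) 0, P1 K),
              Hlo1 (1+a) 0 hq1, 1+a, 0+0, T.cA (1+a), T.dA (1+a), rfl,
              le_rfl, le_rfl, T.cA_le hq2, T.dA_le hq⟩)
        · refine (T.memJ Pl Hmon _ _ _ _).mpr (Or.inr ⟨(T.g2 (1+a) 0, P2 K),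
            Hlo2 (1+a) 0 hq2, 1+a, 0, 0+0, T.dA (1+a), rfl,
            le_rfl, le_rfl, le_rfl, T.dA_le hq⟩)
      · refine (T.memJ Pl Hmon _ _ _ _).mpr (Or.inr ⟨(T.g3 (1+a) d, P3 K),
          Hlo3 (1+a) d hq (by omega), 1+a, 0, 0, d, rfl,
          le_rfl, le_rfl, le_rfl, le_rfl⟩)
    · rw [SetLike.mem_coe, Ideal.mem_colon_span_singleton, X_eq_mn_3, g3, mn_mul]
      simp only [Nat.zero_add]
      by_cases hq : T.q3 a (1 + d)
      · by_cases hq2 : T.q2 a 0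
        · by_cases hq1 : T.q1 a 0
          · exact Submodule.mem_sup_left ((T.memI _ _ _ _).mpr ⟨hq1, hq2, hq⟩)
          · refine (T.memJ Pl Hmon _ _ _ _).mpr (Or.inr ⟨(T.g1 a 0, P1 K),
              Hlo1 a 0 hq1, a, 0+0, T.cA a, T.dA a, rfl,
              le_rfl, le_rfl, T.cA_le hq2, T.dA_le hq⟩)
        · refine (T.memJ Pl Hmon _ _ _ _).mpr (Or.inr ⟨(T.g2 a 0, P2 K),
            Hlo2 a 0 hq2, a, 0, 0+0, T.dA a, rfl,
            le_rfl, le_rfl, le_rfl, T.dA_le hq⟩)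
      · refine (T.memJ Pl Hmon _ _ _ _).mpr (Or.inr ⟨(T.g3 a (1+d), P3 K),
          Hlo3 a (1+d) hq (by omega), a, 0, 0, 1+d, rfl,
          le_rfl, le_rfl, le_rfl, le_rfl⟩)

end Ctx

namespace Ctx

attribute [local instance] Classical.propDecidable

variable {K : Type*} [Field K] (T : Ctx K)

noncomputable def blk1 (D : ℕ) : List (MvPolynomial (Fin 4) K × Ideal (MvPolynomial (Fin 4) K)) :=
  (List.range (D+1)).filterMap
    (fun a => if ¬ T.q1 a (D - a) then some (T.g1 a (D - a), P1 K) else none)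

noncomputable def blk2 (D : ℕ) : List (MvPolynomial (Fin 4) K × Ideal (MvPolynomial (Fin 4) K)) :=
  (List.range (D+1)).filterMap
    (fun a => if ¬ T.q2 a (D - a) then some (T.g2 a (D - a), P2 K) else none)

noncomputable def blk3 (D : ℕ) : List (MvPolynomial (Fin 4) K × Ideal (MvPolynomial (Fin 4) K)) :=
  (List.range (D+1)).filterMap
    (fun a => if ¬ T.q3 a (D - a) then some (T.g3 a (D - a), P3 K) else none)

lemma mem_blk1 {D : ℕ} {p} : p ∈ T.blk1 D ↔
    ∃ a, a ≤ D ∧ ¬ T.q1 a (D - a) ∧ p = (T.g1 a (D - a), P1 K) := by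
  simp only [blk1, List.mem_filterMap, List.mem_range]
  constructor
  · rintro ⟨a, ha, hopt⟩
    split_ifs at hopt with h
    exact ⟨a, by omega, h, (Option.some_inj.mp hopt).symm⟩
  · rintro ⟨a, ha, h, rfl⟩
    exact ⟨a, by omega, by rw [if_pos h]⟩

lemma mem_blk2 {D : ℕ} {p} : p ∈ T.blk2 D ↔
    ∃ a, a ≤ D ∧ ¬ T.q2 a (D - a) ∧ p = (T.g2 a (D - a), P2 K) := by
  simp only [blk2, List.mem_filterMap, List.mem_range]
  constructor
  · rintro ⟨a, ha, hopt⟩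
    split_ifs at hopt with h
    exact ⟨a, by omega, h, (Option.some_inj.mp hopt).symm⟩
  · rintro ⟨a, ha, h, rfl⟩
    exact ⟨a, by omega, by rw [if_pos h]⟩

lemma mem_blk3 {D : ℕ} {p} : p ∈ T.blk3 D ↔
    ∃ a, a ≤ D ∧ ¬ T.q3 a (D - a) ∧ p = (T.g3 a (D - a), P3 K) := by
  simp only [blk3, List.mem_filterMap, List.mem_range]
  constructor
  · rintro ⟨a, ha, hopt⟩
    split_ifs at hopt with h
    exact ⟨a, by omega, h, (Option.some_inj.mp hopt).symm⟩
  · rintro ⟨a, ha, h, rfl⟩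
    exact ⟨a, by omega, by rw [if_pos h]⟩

lemma nodup_blk1 (D : ℕ) : (T.blk1 D).Nodup := by
  refine List.Nodup.filterMap ?_ (List.nodup_range)
  intro a a' p hpa hpa'
  rw [Option.mem_def] at hpa hpa'
  split_ifs at hpa hpa' with h h'
  have h1 := Option.some_inj.mp hpa
  have h2 := Option.some_inj.mp hpa'
  rw [← h2] at h1
  have h3 : T.g1 a (D-a) = T.g1 a' (D-a') := congrArg Prod.fst h1
  have := (mn_inj h3).1
  omega

lemma nodup_blk2 (D : ℕ) : (T.blk2 D).Nodup := by
  refine List.Nodup.filterMap ?_ (List.nodup_range)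
  intro a a' p hpa hpa'
  rw [Option.mem_def] at hpa hpa'
  split_ifs at hpa hpa' with h h'
  have h1 := Option.some_inj.mp hpa
  have h2 := Option.some_inj.mp hpa'
  rw [← h2] at h1
  have h3 : T.g2 a (D-a) = T.g2 a' (D-a') := congrArg Prod.fst h1
  have := (mn_inj h3).1
  omega

lemma nodup_blk3 (D : ℕ) : (T.blk3 D).Nodup := by
  refine List.Nodup.filterMap ?_ (List.nodup_range)
  intro a a' p hpa hpa'
  rw [Option.mem_def] at hpa hpa'
  split_ifs at hpa hpa' with h h'
  have h1 := Option.some_inj.mp hpa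
  have h2 := Option.some_inj.mp hpa'
  rw [← h2] at h1
  have h3 : T.g3 a (D-a) = T.g3 a' (D-a') := congrArg Prod.fst h1
  have := (mn_inj h3).1
  omega

noncomputable def block (β : ℕ) : List (MvPolynomial (Fin 4) K × Ideal (MvPolynomial (Fin 4) K)) :=
  if β < 2*T.N+1 then T.blk1 (2*T.N - β)
  else if β < 2*(2*T.N+1) then T.blk2 (2*T.N - (β - (2*T.N+1)))
  else T.blk3 (2*T.N - (β - 2*(2*T.N+1)))

noncomputable def genList : List (MvPolynomial (Fin 4) K × Ideal (MvPolynomial (Fin 4) K)) :=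
  (List.range (3*(2*T.N+1))).flatMap T.block

end Ctx

namespace Ctx

attribute [local instance] Classical.propDecidable

variable {K : Type*} [Field K] (T : Ctx K)

theorem isClean_of_ctx (hmin1 : P1 K ∈ T.I.minimalPrimes)
    (hmin2 : P2 K ∈ T.I.minimalPrimes) (hmin3 : P3 K ∈ T.I.minimalPrimes) :
    IsClean T.I := by
  refine isClean_of_list T.I T.genList ?hmin ?hcol ?htop
  case hmin =>
    intro p hp
    rw [genList, List.mem_flatMap] at hp
    obtain ⟨β, hβ, hpb⟩ := hp
    rw [block] at hpb
    split_ifs at hpb with h1 h2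
    · obtain ⟨a, _, _, rfl⟩ := (T.mem_blk1).mp hpb; exact hmin1
    · obtain ⟨a, _, _, rfl⟩ := (T.mem_blk2).mp hpb; exact hmin2
    · obtain ⟨a, _, _, rfl⟩ := (T.mem_blk3).mp hpb; exact hmin3
  case htop =>
    rw [Ideal.eq_top_iff_one]
    by_cases h3 : T.q3 0 0
    · by_cases h2 : T.q2 0 0
      · by_cases h1 : T.q1 0 0
        · rw [one_eq_mn]
          exact Submodule.mem_sup_left ((T.memI 0 0 0 0).mpr ⟨h1, h2, h3⟩)
        · -- generator g1 0 0 = 1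
          have hc : T.cA 0 = 0 := Nat.le_antisymm (T.cA_le h2) (Nat.zero_le _)
          have hd : T.dA 0 = 0 := Nat.le_antisymm (T.dA_le h3) (Nat.zero_le _)
          have h1' : (T.g1 0 0, P1 K) ∈ T.genList := by
            rw [genList, List.mem_flatMap]
            refine ⟨2*T.N, List.mem_range.mpr (by omega), ?_⟩
            rw [block, if_pos (by omega), show 2*T.N - 2*T.N = 0 from by omega, T.mem_blk1]
            exact ⟨0, le_rfl, by simpa using h1, rfl⟩
          refine Submodule.mem_sup_right (Ideal.subset_span ⟨_, h1', ?_⟩)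
          show T.g1 0 0 = 1
          rw [g1, hc, hd, ← one_eq_mn]
      · have hd : T.dA 0 = 0 := Nat.le_antisymm (T.dA_le h3) (Nat.zero_le _)
        have h2' : (T.g2 0 0, P2 K) ∈ T.genList := by
          rw [genList, List.mem_flatMap]
          refine ⟨(2*T.N+1) + 2*T.N, List.mem_range.mpr (by omega), ?_⟩
          rw [block, if_neg (by omega), if_pos (by omega),
            show 2*T.N - ((2*T.N+1) + 2*T.N - (2*T.N+1)) = 0 from by omega, T.mem_blk2]
          exact ⟨0, le_rfl, by simpa using h2, rfl⟩
        refine Submodule.mem_sup_right (Ideal.subset_span ⟨_, h2', ?_⟩)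
        show T.g2 0 0 = 1
        rw [g2, hd, ← one_eq_mn]
    · have h3' : (T.g3 0 0, P3 K) ∈ T.genList := by
        rw [genList, List.mem_flatMap]
        refine ⟨2*(2*T.N+1) + 2*T.N, List.mem_range.mpr (by omega), ?_⟩
        rw [block, if_neg (by omega), if_neg (by omega),
          show 2*T.N - (2*(2*T.N+1) + 2*T.N - 2*(2*T.N+1)) = 0 from by omega, T.mem_blk3]
        exact ⟨0, le_rfl, by simpa using h3, rfl⟩
      refine Submodule.mem_sup_right (Ideal.subset_span ⟨_, h3', ?_⟩)
      show T.g3 0 0 = 1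
      rw [g3, ← one_eq_mn]
  case hcol =>
    intro k hk
    unfold genList at hk ⊢
    obtain ⟨b, hbB, i, hi, hget, htake⟩ := range_flat_take T.block _ k hk
    rw [htake, hget]
    by_cases hb1 : b < 2*T.N+1
    · -- stage 1
      have hbl : T.block b = T.blk1 (2*T.N - b) := by rw [block, if_pos hb1]
      obtain ⟨p0, hpdef⟩ : ∃ p0, (T.block b).get ⟨i, hi⟩ = p0 := ⟨_, rfl⟩
      rw [hpdef]
      have hcur : p0 ∈ T.block b := by rw [← hpdef]; exact List.get_mem _ _
      rw [hbl, T.mem_blk1] at hcur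
      obtain ⟨a, haD, hq, hpe⟩ := hcur
      rw [hpe]
      refine T.step1 _ a (2*T.N - b - a) hq ?_ ?_
      · intro a' b' hq' hdeg
        have hb1' := T.bnd1 hq'
        apply List.mem_append_left
        rw [mem_range_flatMap]
        refine ⟨2*T.N - (a'+b'), by omega, ?_⟩
        have hbl' : T.block (2*T.N - (a'+b')) = T.blk1 (a'+b') := by
          rw [block, if_pos (by omega)]
          congr 1
          omega
        rw [hbl', T.mem_blk1]
        refine ⟨a', by omega, ?_, ?_⟩
        · rwa [show a'+b'-a' = b' from by omega]
        · rw [show a'+b'-a' = b' from by omega]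
      · intro p hp
        rcases List.mem_append.mp hp with hp | hp
        · rw [mem_range_flatMap] at hp
          obtain ⟨β', hβ', hpβ⟩ := hp
          have hbl' : T.block β' = T.blk1 (2*T.N - β') := by
            rw [block, if_pos (by omega)]
          rw [hbl', T.mem_blk1] at hpβ
          obtain ⟨a', ha', hq', rfl⟩ := hpβ
          exact ⟨a', (2*T.N - β') - a', hq', rfl, by omega, by omega⟩
        · have hnd : (T.block b).Nodup := by rw [hbl]; exact T.nodup_blk1 _
          have hne := nodup_take_ne hnd hi hp
          rw [hpdef, hpe] at hne
          have hp' := List.take_subset _ _ hp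
          rw [hbl, T.mem_blk1] at hp'
          obtain ⟨a', ha', hq', he'⟩ := hp'
          refine ⟨a', (2*T.N - b) - a', hq', by rw [he'], by omega, ?_⟩
          rintro ⟨h1, h2⟩
          subst h1
          exact hne he'
    · by_cases hb2 : b < 2*(2*T.N+1)
      · -- stage 2
        have hbl : T.block b = T.blk2 (2*T.N - (b - (2*T.N+1))) := by
          rw [block, if_neg hb1, if_pos hb2]
        obtain ⟨p0, hpdef⟩ : ∃ p0, (T.block b).get ⟨i, hi⟩ = p0 := ⟨_, rfl⟩
        rw [hpdef]
        have hcur : p0 ∈ T.block b := by rw [← hpdef]; exact List.get_mem _ _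
        rw [hbl, T.mem_blk2] at hcur
        obtain ⟨a, haD, hq, hpe⟩ := hcur
        rw [hpe]
        refine T.step2 _ a (2*T.N - (b - (2*T.N+1)) - a) hq ?_ ?_ ?_
        · -- Hlo1 : all stage-1 generators are prior
          intro a' b' hq'
          have hb1' := T.bnd1 hq'
          apply List.mem_append_left
          rw [mem_range_flatMap]
          refine ⟨2*T.N - (a'+b'), by omega, ?_⟩
          have hbl' : T.block (2*T.N - (a'+b')) = T.blk1 (a'+b') := by
            rw [block, if_pos (by omega)]
            congr 1
            omega
          rw [hbl', T.mem_blk1]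
          refine ⟨a', by omega, ?_, ?_⟩
          · rwa [show a'+b'-a' = b' from by omega]
          · rw [show a'+b'-a' = b' from by omega]
        · -- Hlo2
          intro a' c' hq' hdeg
          have hb2' := T.bnd2 hq'
          apply List.mem_append_left
          rw [mem_range_flatMap]
          refine ⟨(2*T.N+1) + (2*T.N - (a'+c')), by omega, ?_⟩
          have hbl' : T.block ((2*T.N+1) + (2*T.N - (a'+c'))) = T.blk2 (a'+c') := by
            rw [block, if_neg (by omega), if_pos (by omega)]
            congr 1
            omega
          rw [hbl', T.mem_blk2]
          refine ⟨a', by omega, ?_, ?_⟩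
          · rwa [show a'+c'-a' = c' from by omega]
          · rw [show a'+c'-a' = c' from by omega]
        · intro p hp
          rcases List.mem_append.mp hp with hp | hp
          · rw [mem_range_flatMap] at hp
            obtain ⟨β', hβ', hpβ⟩ := hp
            by_cases hβ'1 : β' < 2*T.N+1
            · have hbl' : T.block β' = T.blk1 (2*T.N - β') := by
                rw [block, if_pos hβ'1]
              rw [hbl', T.mem_blk1] at hpβ
              obtain ⟨a', ha', hq', rfl⟩ := hpβ
              exact Or.inl ⟨a', (2*T.N - β') - a', hq', rfl⟩
            · have hbl' : T.block β' = T.blk2 (2*T.N - (β' - (2*T.N+1))) := by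
                rw [block, if_neg hβ'1, if_pos (by omega)]
              rw [hbl', T.mem_blk2] at hpβ
              obtain ⟨a', ha', hq', rfl⟩ := hpβ
              exact Or.inr ⟨a', (2*T.N - (β' - (2*T.N+1))) - a', hq', rfl, by omega, by omega⟩
          · have hnd : (T.block b).Nodup := by rw [hbl]; exact T.nodup_blk2 _
            have hne := nodup_take_ne hnd hi hp
            rw [hpdef, hpe] at hne
            have hp' := List.take_subset _ _ hp
            rw [hbl, T.mem_blk2] at hp'
            obtain ⟨a', ha', hq', he'⟩ := hp'
            refine Or.inr ⟨a', (2*T.N - (b - (2*T.N+1))) - a', hq', by rw [he'], by omega, ?_⟩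
            rintro ⟨h1, h2⟩
            subst h1
            exact hne he'
      · -- stage 3
        have hbl : T.block b = T.blk3 (2*T.N - (b - 2*(2*T.N+1))) := by
          rw [block, if_neg hb1, if_neg hb2]
        obtain ⟨p0, hpdef⟩ : ∃ p0, (T.block b).get ⟨i, hi⟩ = p0 := ⟨_, rfl⟩
        rw [hpdef]
        have hcur : p0 ∈ T.block b := by rw [← hpdef]; exact List.get_mem _ _
        rw [hbl, T.mem_blk3] at hcur
        obtain ⟨a, haD, hq, hpe⟩ := hcur
        rw [hpe]
        have hbB' : b - 2*(2*T.N+1) ≤ 2*T.N := by omega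
        refine T.step3 _ a (2*T.N - (b - 2*(2*T.N+1)) - a) hq ?_ ?_ ?_ ?_
        · intro a' b' hq'
          have hb1' := T.bnd1 hq'
          apply List.mem_append_left
          rw [mem_range_flatMap]
          refine ⟨2*T.N - (a'+b'), by omega, ?_⟩
          have hbl' : T.block (2*T.N - (a'+b')) = T.blk1 (a'+b') := by
            rw [block, if_pos (by omega)]
            congr 1
            omega
          rw [hbl', T.mem_blk1]
          refine ⟨a', by omega, ?_, ?_⟩
          · rwa [show a'+b'-a' = b' from by omega]
          · rw [show a'+b'-a' = b' from by omega]
        · intro a' c' hq'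
          have hb2' := T.bnd2 hq'
          apply List.mem_append_left
          rw [mem_range_flatMap]
          refine ⟨(2*T.N+1) + (2*T.N - (a'+c')), by omega, ?_⟩
          have hbl' : T.block ((2*T.N+1) + (2*T.N - (a'+c'))) = T.blk2 (a'+c') := by
            rw [block, if_neg (by omega), if_pos (by omega)]
            congr 1
            omega
          rw [hbl', T.mem_blk2]
          refine ⟨a', by omega, ?_, ?_⟩
          · rwa [show a'+c'-a' = c' from by omega]
          · rw [show a'+c'-a' = c' from by omega]
        · intro a' d' hq' hdeg
          have hb3' := T.bnd3 hq'
          apply List.mem_append_left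
          rw [mem_range_flatMap]
          refine ⟨2*(2*T.N+1) + (2*T.N - (a'+d')), by omega, ?_⟩
          have hbl' : T.block (2*(2*T.N+1) + (2*T.N - (a'+d'))) = T.blk3 (a'+d') := by
            rw [block, if_neg (by omega), if_neg (by omega)]
            congr 1
            omega
          rw [hbl', T.mem_blk3]
          refine ⟨a', by omega, ?_, ?_⟩
          · rwa [show a'+d'-a' = d' from by omega]
          · rw [show a'+d'-a' = d' from by omega]
        · intro p hp
          rcases List.mem_append.mp hp with hp | hp
          · rw [mem_range_flatMap] at hp
            obtain ⟨β', hβ', hpβ⟩ := hp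
            by_cases hβ'1 : β' < 2*T.N+1
            · have hbl' : T.block β' = T.blk1 (2*T.N - β') := by
                rw [block, if_pos hβ'1]
              rw [hbl', T.mem_blk1] at hpβ
              obtain ⟨a', ha', hq', rfl⟩ := hpβ
              exact Or.inl ⟨a', (2*T.N - β') - a', hq', rfl⟩
            · by_cases hβ'2 : β' < 2*(2*T.N+1)
              · have hbl' : T.block β' = T.blk2 (2*T.N - (β' - (2*T.N+1))) := by
                  rw [block, if_neg hβ'1, if_pos hβ'2]
                rw [hbl', T.mem_blk2] at hpβ
                obtain ⟨a', ha', hq', rfl⟩ := hpβ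
                exact Or.inr (Or.inl ⟨a', (2*T.N - (β' - (2*T.N+1))) - a', hq', rfl⟩)
              · have hbl' : T.block β' = T.blk3 (2*T.N - (β' - 2*(2*T.N+1))) := by
                  rw [block, if_neg hβ'1, if_neg hβ'2]
                rw [hbl', T.mem_blk3] at hpβ
                obtain ⟨a', ha', hq', rfl⟩ := hpβ
                exact Or.inr (Or.inr ⟨a', (2*T.N - (β' - 2*(2*T.N+1))) - a', hq', rfl,
                  by omega, by omega⟩)
          · have hnd : (T.block b).Nodup := by rw [hbl]; exact T.nodup_blk3 _
            have hne := nodup_take_ne hnd hi hp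
            rw [hpdef, hpe] at hne
            have hp' := List.take_subset _ _ hp
            rw [hbl, T.mem_blk3] at hp'
            obtain ⟨a', ha', hq', he'⟩ := hp'
            refine Or.inr (Or.inr ⟨a', (2*T.N - (b - 2*(2*T.N+1))) - a', hq', by rw [he'],
              by omega, ?_⟩)
            rintro ⟨h1, h2⟩
            subst h1
            exact hne he'

end Ctx

section Derivation

open MvPolynomial

variable {K : Type*} [Field K]

-- non-membership of a variable in a 2-variable monomial prime
lemma X_not_mem_span {i j k : Fin 4} (hik : i ≠ k) (hjk : j ≠ k) :
    (X k : MvPolynomial (Fin 4) K) ∉ Ideal.span {(X i : MvPolynomial (Fin 4) K), X j} := by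
  intro h
  set φ : MvPolynomial (Fin 4) K →ₐ[K] K := aeval (fun l : Fin 4 => if l = k then (1 : K) else 0) with hφ
  have hle : Ideal.span {(X i : MvPolynomial (Fin 4) K), X j} ≤
      RingHom.ker (φ : MvPolynomial (Fin 4) K →+* K) := by
    rw [Ideal.span_le]
    rintro x hx
    simp only [Set.mem_insert_iff, Set.mem_singleton_iff] at hx
    rcases hx with rfl | rfl <;>
      simp [RingHom.mem_ker, hφ, aeval_X, hik, hjk]
  have h2 := hle h
  simp only [SetLike.mem_coe, RingHom.mem_ker, RingHom.coe_coe, hφ, aeval_X, if_pos rfl] at h2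
  exact one_ne_zero h2

lemma colon_colon (A : Ideal (MvPolynomial (Fin 4) K)) (u w : MvPolynomial (Fin 4) K) :
    (A.colon (Ideal.span {u})).colon (Ideal.span {w}) = A.colon (Ideal.span {u * w}) := by
  ext x
  rw [Ideal.mem_colon_span_singleton, Ideal.mem_colon_span_singleton, Ideal.mem_colon_span_singleton]
  constructor
  · intro h; rw [show x * (u * w) = x * w * u by ring]; exact h
  · intro h; rw [show x * w * u = x * (u * w) by ring]; exact h

/-- saturation of an ideal at an element -/
lemma saturation (A : Ideal (MvPolynomial (Fin 4) K)) (v : MvPolynomial (Fin 4) K) :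
    ∃ Q : Ideal (MvPolynomial (Fin 4) K), (∃ k, Q = A.colon (Ideal.span {v ^ k})) ∧
      Q.colon (Ideal.span {v}) = Q ∧ A ≤ Q ∧
      (∀ m, A.colon (Ideal.span {v ^ m}) ≤ Q) := by
  have hmono : Monotone (fun k : ℕ => A.colon (Ideal.span {v ^ k})) := by
    intro k m hkm
    intro x hx
    rw [Ideal.mem_colon_span_singleton] at hx ⊢
    rw [show v ^ m = v ^ k * v ^ (m - k) by rw [← pow_add]; congr 1; omega, ← mul_assoc]
    exact Ideal.mul_mem_right _ _ hx
  obtain ⟨k, hk⟩ := monotone_stabilizes_iff_noetherian.mpr inferInstance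
    ⟨fun k : ℕ => A.colon (Ideal.span {v ^ k}), hmono⟩
  refine ⟨A.colon (Ideal.span {v ^ k}), ⟨k, rfl⟩, ?_, ?_, ?_⟩
  · rw [colon_colon, ← pow_succ]
    exact (hk (k+1) (by omega)).symm
  · intro x hx
    rw [Ideal.mem_colon_span_singleton]
    exact Ideal.mul_mem_right _ _ hx
  · intro m
    rcases le_or_gt m k with h | h
    · exact hmono h
    · exact le_of_eq (hk m (by omega)).symm

lemma colon_pow_eq {Q : Ideal (MvPolynomial (Fin 4) K)} {v : MvPolynomial (Fin 4) K}
    (hsat : Q.colon (Ideal.span {v}) = Q) (m : ℕ) :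
    Q.colon (Ideal.span {v ^ m}) = Q := by
  induction m with
  | zero =>
    ext x
    rw [Ideal.mem_colon_span_singleton, pow_zero, mul_one]
  | succ m ih =>
    rw [pow_succ, ← colon_colon, ih, hsat]

lemma not_mem_ass_of_sat {J P : Ideal (MvPolynomial (Fin 4) K)} {t : MvPolynomial (Fin 4) K}
    (hsat : J.colon (Ideal.span {t}) = J)
    (hP : IsAssociatedPrime P ((MvPolynomial (Fin 4) K) ⧸ J)) : t ∉ P := by
  obtain ⟨hprime, x, hx⟩ := isAssociatedPrime_iff.mp hP
  obtain ⟨f, rfl⟩ := Ideal.Quotient.mk_surjective x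
  intro ht
  rw [hx, Submodule.mem_colon_singleton, Submodule.mem_bot] at ht
  have hf : f ∈ J := by
    rw [← hsat, Ideal.mem_colon_span_singleton, mul_comm]
    rw [show t • (Ideal.Quotient.mk J f) = Ideal.Quotient.mk J (t * f) from rfl] at ht
    rwa [← Ideal.Quotient.eq_zero_iff_mem]
  apply hprime.ne_top
  rw [hx, Submodule.colon_eq_top_iff_subset, Set.singleton_subset_iff, SetLike.mem_coe,
    Submodule.mem_bot]
  rwa [Ideal.Quotient.eq_zero_iff_mem]

lemma I_le_ass {I P : Ideal (MvPolynomial (Fin 4) K)}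
    (h : IsAssociatedPrime P ((MvPolynomial (Fin 4) K) ⧸ I)) : I ≤ P := by
  obtain ⟨-, x, rfl⟩ := isAssociatedPrime_iff.mp h
  intro r hr
  rw [Submodule.mem_colon_singleton, Submodule.mem_bot]
  obtain ⟨f, rfl⟩ := Ideal.Quotient.mk_surjective x
  rw [show r • (Ideal.Quotient.mk I f) = Ideal.Quotient.mk I (r * f) from rfl,
    Ideal.Quotient.eq_zero_iff_mem]
  exact Ideal.mul_mem_right _ _ hr

/-- key saturation lemma: if every associated prime of `S/I` contains `t` or `v`,
then `t` is in the radical of the `v`-saturation of `I`. -/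
lemma rad_mem (I Q : Ideal (MvPolynomial (Fin 4) K)) (v t : MvPolynomial (Fin 4) K) (k : ℕ)
    (hQk : Q = I.colon (Ideal.span {v ^ k}))
    (hsat : Q.colon (Ideal.span {v}) = Q)
    (hPtv : ∀ P, P ∈ associatedPrimes (MvPolynomial (Fin 4) K)
      ((MvPolynomial (Fin 4) K) ⧸ I) → t ∈ P ∨ v ∈ P) :
    ∃ n, t ^ n ∈ Q := by
  obtain ⟨J, ⟨n, hJn⟩, hJsat, hQJ, -⟩ := saturation Q t
  by_cases hJtop : J = ⊤
  · refine ⟨n, ?_⟩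
    have : (1 : MvPolynomial (Fin 4) K) ∈ J := hJtop ▸ Submodule.mem_top
    rw [hJn, Ideal.mem_colon_span_singleton, one_mul] at this
    exact this
  · exfalso
    have : Nontrivial ((MvPolynomial (Fin 4) K) ⧸ J) := Ideal.Quotient.nontrivial_iff.mpr hJtop
    obtain ⟨P', hP'⟩ := associatedPrimes.nonempty (MvPolynomial (Fin 4) K)
      ((MvPolynomial (Fin 4) K) ⧸ J)
    -- the injection S/J → S/I given by multiplication with t^n * v^k
    set φ : MvPolynomial (Fin 4) K →ₗ[MvPolynomial (Fin 4) K]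
        (MvPolynomial (Fin 4) K) ⧸ I :=
      LinearMap.toSpanSingleton _ _ (Ideal.Quotient.mk I (t ^ n * v ^ k)) with hφ
    have hker : J ≤ (LinearMap.ker φ : Submodule (MvPolynomial (Fin 4) K)
        (MvPolynomial (Fin 4) K)) := by
      intro x hx
      rw [LinearMap.mem_ker, hφ, LinearMap.toSpanSingleton_apply,
        show x • (Ideal.Quotient.mk I (t ^ n * v ^ k))
          = Ideal.Quotient.mk I (x * (t ^ n * v ^ k)) from rfl,
        Ideal.Quotient.eq_zero_iff_mem]
      rw [hJn, Ideal.mem_colon_span_singleton] at hx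
      rw [hQk, Ideal.mem_colon_span_singleton] at hx
      rwa [← mul_assoc]
    set g := Submodule.liftQ J φ hker with hg
    have hginj : Function.Injective g := by
      rw [← LinearMap.ker_eq_bot, Submodule.ker_liftQ_eq_bot']
      apply le_antisymm hker
      intro x hx
      rw [LinearMap.mem_ker, hφ, LinearMap.toSpanSingleton_apply,
        show x • (Ideal.Quotient.mk I (t ^ n * v ^ k))
          = Ideal.Quotient.mk I (x * (t ^ n * v ^ k)) from rfl,
        Ideal.Quotient.eq_zero_iff_mem, ← mul_assoc] at hx
      rw [hJn, Ideal.mem_colon_span_singleton, hQk, Ideal.mem_colon_span_singleton]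
      exact hx
    have hmem : P' ∈ associatedPrimes (MvPolynomial (Fin 4) K)
        ((MvPolynomial (Fin 4) K) ⧸ I) :=
      associatedPrimes.subset_of_injective hginj hP'
    have hv : v ∉ P' := by
      refine not_mem_ass_of_sat ?_ hP'
      rw [hJn, colon_colon, mul_comm (t ^ n) v, ← colon_colon, hsat, ← hJn]
    have ht : t ∉ P' := not_mem_ass_of_sat hJsat hP'
    rcases hPtv P' hmem with h | h
    · exact ht h
    · exact hv h

end Derivation

end Development

/-- If `I ⊆ K[x,y,z,w]` is a monomial ideal with
`Ass(S/I) = {(x,y), (x,z), (x,w)}`, then `S/I` is clean. -/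
theorem stmt_8 (I : Ideal S) (hI : IsMonomialIdeal I)
    (hAss : associatedPrimes S (S ⧸ I) =
      {Ideal.span {X 0, X 1}, Ideal.span {X 0, X 2}, Ideal.span {X 0, X 3}}) :
    IsClean I := by
  classical
  obtain ⟨GI, hGI, hIspan⟩ := hI
  set v1 : S := X 2 * X 3 with hv1def
  set v2 : S := X 1 * X 3 with hv2def
  set v3 : S := X 1 * X 2 with hv3def
  have v1pow : ∀ m : ℕ, v1 ^ m = mn 0 0 m m := by
    intro m
    rw [hv1def, mul_pow, Xpow_eq_mn_2, Xpow_eq_mn_3, mn_mul]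
    congr 1 <;> omega
  have v2pow : ∀ m : ℕ, v2 ^ m = mn 0 m 0 m := by
    intro m
    rw [hv2def, mul_pow, Xpow_eq_mn_1, Xpow_eq_mn_3, mn_mul]
    congr 1 <;> omega
  have v3pow : ∀ m : ℕ, v3 ^ m = mn 0 m m 0 := by
    intro m
    rw [hv3def, mul_pow, Xpow_eq_mn_1, Xpow_eq_mn_2, mn_mul]
    congr 1 <;> omega
  obtain ⟨Q1, ⟨k1, hQ1k⟩, hsat1, hIQ1, hsup1⟩ := saturation I v1
  obtain ⟨Q2, ⟨k2, hQ2k⟩, hsat2, hIQ2, hsup2⟩ := saturation I v2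
  obtain ⟨Q3, ⟨k3, hQ3k⟩, hsat3, hIQ3, hsup3⟩ := saturation I v3
  -- the three associated primes
  have hA1 : IsAssociatedPrime (P1 K) (S ⧸ I) := by
    rw [← AssociatedPrimes.mem_iff, hAss]; exact Set.mem_insert _ _
  have hA2 : IsAssociatedPrime (P2 K) (S ⧸ I) := by
    rw [← AssociatedPrimes.mem_iff, hAss]
    exact Set.mem_insert_iff.mpr (Or.inr (Set.mem_insert _ _))
  have hA3 : IsAssociatedPrime (P3 K) (S ⧸ I) := by
    rw [← AssociatedPrimes.mem_iff, hAss]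
    exact Set.mem_insert_iff.mpr (Or.inr (Set.mem_insert_iff.mpr (Or.inr rfl)))
  have hX01 : (X 0 : S) ∈ P1 K := Ideal.subset_span (Set.mem_insert _ _)
  have hX02 : (X 0 : S) ∈ P2 K := Ideal.subset_span (Set.mem_insert _ _)
  have hX03 : (X 0 : S) ∈ P3 K := Ideal.subset_span (Set.mem_insert _ _)
  have hX11 : (X 1 : S) ∈ P1 K := Ideal.subset_span (Set.mem_insert_iff.mpr (Or.inr rfl))
  have hX22 : (X 2 : S) ∈ P2 K := Ideal.subset_span (Set.mem_insert_iff.mpr (Or.inr rfl))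
  have hX33 : (X 3 : S) ∈ P3 K := Ideal.subset_span (Set.mem_insert_iff.mpr (Or.inr rfl))
  -- I is the intersection of the three saturations
  have hIeq : I = Q1 ⊓ (Q2 ⊓ Q3) := by
    refine le_antisymm (le_inf hIQ1 (le_inf hIQ2 hIQ3)) ?_
    intro f hf
    obtain ⟨hf1, hf2, hf3⟩ := Submodule.mem_inf.mp hf |>.imp id Submodule.mem_inf.mp
    by_contra hfI
    obtain ⟨P, hP, hle⟩ := exists_le_isAssociatedPrime_of_isNoetherianRing S
      (Ideal.Quotient.mk I f) (by rwa [ne_eq, Ideal.Quotient.eq_zero_iff_mem])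
    have hvmem : ∀ (v : S) (k : ℕ) (Q : Ideal S), Q = I.colon (Ideal.span {v ^ k}) →
        f ∈ Q → v ^ k ∈ P := by
      intro v k Q hQ hfQ
      apply hle
      rw [Submodule.mem_colon_singleton, Submodule.mem_bot,
        show (v ^ k) • (Ideal.Quotient.mk I f) = Ideal.Quotient.mk I (v ^ k * f) from rfl,
        Ideal.Quotient.eq_zero_iff_mem, mul_comm]
      rw [hQ, Ideal.mem_colon_span_singleton] at hfQ
      exact hfQ
    have hp1 := hvmem v1 k1 Q1 hQ1k hf1
    have hp2 := hvmem v2 k2 Q2 hQ2k hf2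
    have hp3 := hvmem v3 k3 Q3 hQ3k hf3
    have hP' : P ∈ associatedPrimes S (S ⧸ I) := hP
    rw [hAss] at hP'
    simp only [Set.mem_insert_iff, Set.mem_singleton_iff] at hP'
    rcases hP' with rfl | rfl | rfl
    · have hprime : (Ideal.span {(X 0 : S), X 1}).IsPrime := hA1.isPrime
      rcases hprime.mem_or_mem (hprime.mem_of_pow_mem _ hp1) with h | h
      · exact X_not_mem_span (by decide) (by decide) h
      · exact X_not_mem_span (by decide) (by decide) h
    · have hprime : (Ideal.span {(X 0 : S), X 2}).IsPrime := hA2.isPrime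
      rcases hprime.mem_or_mem (hprime.mem_of_pow_mem _ hp2) with h | h
      · exact X_not_mem_span (by decide) (by decide) h
      · exact X_not_mem_span (by decide) (by decide) h
    · have hprime : (Ideal.span {(X 0 : S), X 3}).IsPrime := hA3.isPrime
      rcases hprime.mem_or_mem (hprime.mem_of_pow_mem _ hp3) with h | h
      · exact X_not_mem_span (by decide) (by decide) h
      · exact X_not_mem_span (by decide) (by decide) h
  -- cylindricity
  have claim1 : ∀ a b c d : ℕ, ((mn a b c d : S) ∈ Q1 ↔ (mn a b 0 0 : S) ∈ Q1) := by
    intro a b c d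
    constructor
    · intro h
      rw [hQ1k, Ideal.mem_colon_span_singleton] at h
      have h3 : (mn a b 0 0 * v1 ^ (k1 + max c d) : S) ∈ I := by
        have h2 := Ideal.mul_mem_left _ (mn 0 0 (max c d - c) (max c d - d) : S) h
        rw [v1pow, mn_mul, show (mn 0 0 (max c d - c) (max c d - d) : S) *
            (mn (a+0) (b+0) (c+k1) (d+k1)) = mn a b (max c d + k1) (max c d + k1) from by
          rw [mn_mul]; congr 1 <;> omega] at h2
        rw [v1pow, mn_mul, show mn (a+0) (b+0) (0+(k1 + max c d)) (0+(k1 + max c d))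
          = (mn a b (max c d + k1) (max c d + k1) : S) from by congr 1 <;> omega]
        exact h2
      exact hsup1 (k1 + max c d) (by rw [Ideal.mem_colon_span_singleton]; exact h3)
    · intro h
      rw [show (mn a b c d : S) = mn 0 0 c d * mn a b 0 0 from by
        rw [mn_mul]; congr 1 <;> omega]
      exact Ideal.mul_mem_left _ _ h
  have claim2 : ∀ a b c d : ℕ, ((mn a b c d : S) ∈ Q2 ↔ (mn a 0 c 0 : S) ∈ Q2) := by
    intro a b c d
    constructor
    · intro h
      rw [hQ2k, Ideal.mem_colon_span_singleton] at h
      have h3 : (mn a 0 c 0 * v2 ^ (k2 + max b d) : S) ∈ I := by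
        have h2 := Ideal.mul_mem_left _ (mn 0 (max b d - b) 0 (max b d - d) : S) h
        rw [v2pow, mn_mul, show (mn 0 (max b d - b) 0 (max b d - d) : S) *
            (mn (a+0) (b+k2) (c+0) (d+k2)) = mn a (max b d + k2) c (max b d + k2) from by
          rw [mn_mul]; congr 1 <;> omega] at h2
        rw [v2pow, mn_mul, show mn (a+0) (0+(k2 + max b d)) (c+0) (0+(k2 + max b d))
          = (mn a (max b d + k2) c (max b d + k2) : S) from by congr 1 <;> omega]
        exact h2
      exact hsup2 (k2 + max b d) (by rw [Ideal.mem_colon_span_singleton]; exact h3)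
    · intro h
      rw [show (mn a b c d : S) = mn 0 b 0 d * mn a 0 c 0 from by
        rw [mn_mul]; congr 1 <;> omega]
      exact Ideal.mul_mem_left _ _ h
  have claim3 : ∀ a b c d : ℕ, ((mn a b c d : S) ∈ Q3 ↔ (mn a 0 0 d : S) ∈ Q3) := by
    intro a b c d
    constructor
    · intro h
      rw [hQ3k, Ideal.mem_colon_span_singleton] at h
      have h3 : (mn a 0 0 d * v3 ^ (k3 + max b c) : S) ∈ I := by
        have h2 := Ideal.mul_mem_left _ (mn 0 (max b c - b) (max b c - c) 0 : S) h
        rw [v3pow, mn_mul, show (mn 0 (max b c - b) (max b c - c) 0 : S) *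
            (mn (a+0) (b+k3) (c+k3) (d+0)) = mn a (max b c + k3) (max b c + k3) d from by
          rw [mn_mul]; congr 1 <;> omega] at h2
        rw [v3pow, mn_mul, show mn (a+0) (0+(k3 + max b c)) (0+(k3 + max b c)) (d+0)
          = (mn a (max b c + k3) (max b c + k3) d : S) from by congr 1 <;> omega]
        exact h2
      exact hsup3 (k3 + max b c) (by rw [Ideal.mem_colon_span_singleton]; exact h3)
    · intro h
      rw [show (mn a b c d : S) = mn 0 b c 0 * mn a 0 0 d from by
        rw [mn_mul]; congr 1 <;> omega]
      exact Ideal.mul_mem_left _ _ h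
  -- radical memberships
  have hr1x : ∃ n, (X 0 : S) ^ n ∈ Q1 := by
    refine rad_mem I Q1 v1 (X 0) k1 hQ1k hsat1 ?_
    intro P hP
    rw [hAss] at hP
    simp only [Set.mem_insert_iff, Set.mem_singleton_iff] at hP
    rcases hP with rfl | rfl | rfl
    · exact Or.inl hX01
    · exact Or.inl hX02
    · exact Or.inl hX03
  have hr1y : ∃ n, (X 1 : S) ^ n ∈ Q1 := by
    refine rad_mem I Q1 v1 (X 1) k1 hQ1k hsat1 ?_
    intro P hP
    rw [hAss] at hP
    simp only [Set.mem_insert_iff, Set.mem_singleton_iff] at hP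
    rcases hP with rfl | rfl | rfl
    · exact Or.inl hX11
    · exact Or.inr (Ideal.mul_mem_right _ _ hX22)
    · exact Or.inr (Ideal.mul_mem_left _ _ hX33)
  have hr2x : ∃ n, (X 0 : S) ^ n ∈ Q2 := by
    refine rad_mem I Q2 v2 (X 0) k2 hQ2k hsat2 ?_
    intro P hP
    rw [hAss] at hP
    simp only [Set.mem_insert_iff, Set.mem_singleton_iff] at hP
    rcases hP with rfl | rfl | rfl
    · exact Or.inl hX01
    · exact Or.inl hX02
    · exact Or.inl hX03
  have hr2z : ∃ n, (X 2 : S) ^ n ∈ Q2 := by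
    refine rad_mem I Q2 v2 (X 2) k2 hQ2k hsat2 ?_
    intro P hP
    rw [hAss] at hP
    simp only [Set.mem_insert_iff, Set.mem_singleton_iff] at hP
    rcases hP with rfl | rfl | rfl
    · exact Or.inr (Ideal.mul_mem_right _ _ hX11)
    · exact Or.inl hX22
    · exact Or.inr (Ideal.mul_mem_left _ _ hX33)
  have hr3x : ∃ n, (X 0 : S) ^ n ∈ Q3 := by
    refine rad_mem I Q3 v3 (X 0) k3 hQ3k hsat3 ?_
    intro P hP
    rw [hAss] at hP
    simp only [Set.mem_insert_iff, Set.mem_singleton_iff] at hP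
    rcases hP with rfl | rfl | rfl
    · exact Or.inl hX01
    · exact Or.inl hX02
    · exact Or.inl hX03
  have hr3w : ∃ n, (X 3 : S) ^ n ∈ Q3 := by
    refine rad_mem I Q3 v3 (X 3) k3 hQ3k hsat3 ?_
    intro P hP
    rw [hAss] at hP
    simp only [Set.mem_insert_iff, Set.mem_singleton_iff] at hP
    rcases hP with rfl | rfl | rfl
    · exact Or.inr (Ideal.mul_mem_right _ _ hX11)
    · exact Or.inr (Ideal.mul_mem_left _ _ hX22)
    · exact Or.inl hX33
  obtain ⟨n1x, hn1x⟩ := hr1x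
  obtain ⟨n1y, hn1y⟩ := hr1y
  obtain ⟨n2x, hn2x⟩ := hr2x
  obtain ⟨n2z, hn2z⟩ := hr2z
  obtain ⟨n3x, hn3x⟩ := hr3x
  obtain ⟨n3w, hn3w⟩ := hr3w
  rw [Xpow_eq_mn_0] at hn1x hn2x hn3x
  rw [Xpow_eq_mn_1] at hn1y
  rw [Xpow_eq_mn_2] at hn2z
  rw [Xpow_eq_mn_3] at hn3w
  set N := n1x + n1y + n2x + n2z + n3x + n3w with hN
  have hq1x : (mn N 0 0 0 : S) ∈ Q1 := by
    rw [show (mn N 0 0 0 : S) = mn (N - n1x) 0 0 0 * mn n1x 0 0 0 from by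
      rw [mn_mul]; congr 1 <;> omega]
    exact Ideal.mul_mem_left _ _ hn1x
  have hq1y : (mn 0 N 0 0 : S) ∈ Q1 := by
    rw [show (mn 0 N 0 0 : S) = mn 0 (N - n1y) 0 0 * mn 0 n1y 0 0 from by
      rw [mn_mul]; congr 1 <;> omega]
    exact Ideal.mul_mem_left _ _ hn1y
  have hq2x : (mn N 0 0 0 : S) ∈ Q2 := by
    rw [show (mn N 0 0 0 : S) = mn (N - n2x) 0 0 0 * mn n2x 0 0 0 from by
      rw [mn_mul]; congr 1 <;> omega]
    exact Ideal.mul_mem_left _ _ hn2x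
  have hq2z : (mn 0 0 N 0 : S) ∈ Q2 := by
    rw [show (mn 0 0 N 0 : S) = mn 0 0 (N - n2z) 0 * mn 0 0 n2z 0 from by
      rw [mn_mul]; congr 1 <;> omega]
    exact Ideal.mul_mem_left _ _ hn2z
  have hq3x : (mn N 0 0 0 : S) ∈ Q3 := by
    rw [show (mn N 0 0 0 : S) = mn (N - n3x) 0 0 0 * mn n3x 0 0 0 from by
      rw [mn_mul]; congr 1 <;> omega]
    exact Ideal.mul_mem_left _ _ hn3x
  have hq3w : (mn 0 0 0 N : S) ∈ Q3 := by
    rw [show (mn 0 0 0 N : S) = mn 0 0 0 (N - n3w) * mn 0 0 0 n3w from by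
      rw [mn_mul]; congr 1 <;> omega]
    exact Ideal.mul_mem_left _ _ hn3w
  -- build the context
  set T : Ctx K := {
    I := I
    GI := GI
    hGI := hGI
    hIspan := hIspan
    q1 := fun a b => (mn a b 0 0 : S) ∈ Q1
    q2 := fun a c => (mn a 0 c 0 : S) ∈ Q2
    q3 := fun a d => (mn a 0 0 d : S) ∈ Q3
    m1 := by
      intro a b s t h
      show (mn (a+s) (b+t) 0 0 : S) ∈ Q1
      rw [show (mn (a+s) (b+t) 0 0 : S) = mn s t 0 0 * mn a b 0 0 from by
        rw [mn_mul]; congr 1 <;> omega]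
      exact Ideal.mul_mem_left _ _ h
    m2 := by
      intro a c s t h
      show (mn (a+s) 0 (c+t) 0 : S) ∈ Q2
      rw [show (mn (a+s) 0 (c+t) 0 : S) = mn s 0 t 0 * mn a 0 c 0 from by
        rw [mn_mul]; congr 1 <;> omega]
      exact Ideal.mul_mem_left _ _ h
    m3 := by
      intro a d s t h
      show (mn (a+s) 0 0 (d+t) : S) ∈ Q3
      rw [show (mn (a+s) 0 0 (d+t) : S) = mn s 0 0 t * mn a 0 0 d from by
        rw [mn_mul]; congr 1 <;> omega]
      exact Ideal.mul_mem_left _ _ h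
    N := N
    h1x := hq1x
    h1y := hq1y
    h2x := hq2x
    h2z := hq2z
    h3x := hq3x
    h3w := hq3w
    memI := by
      intro a b c d
      show (mn a b c d : S) ∈ I ↔ (mn a b 0 0 : S) ∈ Q1 ∧ (mn a 0 c 0 : S) ∈ Q2 ∧
        (mn a 0 0 d : S) ∈ Q3
      rw [hIeq, Submodule.mem_inf, Submodule.mem_inf, claim1, claim2, claim3]
  } with hT
  -- minimal primes
  have hXN : (mn N 0 0 0 : S) ∈ I := by
    rw [hIeq, Submodule.mem_inf, Submodule.mem_inf]
    exact ⟨hq1x, hq2x, hq3x⟩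
  have hYZWN : (mn 0 N N N : S) ∈ I := by
    rw [hIeq, Submodule.mem_inf, Submodule.mem_inf, claim1, claim2, claim3]
    exact ⟨hq1y, hq2z, hq3w⟩
  have hprod : ((X 1 * X 2 * X 3 : S)) ^ N = mn 0 N N N := by
    rw [mul_pow, mul_pow, Xpow_eq_mn_1, Xpow_eq_mn_2, Xpow_eq_mn_3, mn_mul, mn_mul]
    congr 1 <;> omega
  have hmin : ∀ (P : Ideal S), IsAssociatedPrime P (S ⧸ I) →
      (∀ q : Ideal S, q.IsPrime → I ≤ q → q ≤ P → (X 1 * X 2 * X 3 : S) ∈ q → P ≤ q) →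
      P ∈ I.minimalPrimes := by
    intro P hP hstep
    refine ⟨⟨hP.isPrime, I_le_ass hP⟩, ?_⟩
    intro q hq hqle
    refine hstep q hq.1 hq.2 hqle ?_
    refine hq.1.mem_of_pow_mem N ?_
    rw [hprod]
    exact hq.2 hYZWN
  have hX0q : ∀ q : Ideal S, q.IsPrime → I ≤ q → (X 0 : S) ∈ q := by
    intro q hq hIle
    refine hq.mem_of_pow_mem N ?_
    rw [Xpow_eq_mn_0]
    exact hIle hXN
  have hminP1 : P1 K ∈ I.minimalPrimes := by
    refine hmin _ hA1 ?_
    intro q hq hIq hqle hyzw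
    have hy : (X 1 : S) ∈ q := by
      rcases hq.mem_or_mem hyzw with h | h
      · rcases hq.mem_or_mem h with h' | h'
        · exact h'
        · exact absurd (hqle h') (X_not_mem_span (by decide) (by decide))
      · exact absurd (hqle h) (X_not_mem_span (by decide) (by decide))
    rw [P1, Ideal.span_le]
    rintro x hx
    simp only [Set.mem_insert_iff, Set.mem_singleton_iff] at hx
    rcases hx with rfl | rfl
    · exact hX0q q hq hIq
    · exact hy
  have hminP2 : P2 K ∈ I.minimalPrimes := by
    refine hmin _ hA2 ?_
    intro q hq hIq hqle hyzw
    have hz : (X 2 : S) ∈ q := by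
      rcases hq.mem_or_mem hyzw with h | h
      · rcases hq.mem_or_mem h with h' | h'
        · exact absurd (hqle h') (X_not_mem_span (by decide) (by decide))
        · exact h'
      · exact absurd (hqle h) (X_not_mem_span (by decide) (by decide))
    rw [P2, Ideal.span_le]
    rintro x hx
    simp only [Set.mem_insert_iff, Set.mem_singleton_iff] at hx
    rcases hx with rfl | rfl
    · exact hX0q q hq hIq
    · exact hz
  have hminP3 : P3 K ∈ I.minimalPrimes := by
    refine hmin _ hA3 ?_
    intro q hq hIq hqle hyzw
    have hw : (X 3 : S) ∈ q := by
      rcases hq.mem_or_mem hyzw with h | h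
      · rcases hq.mem_or_mem h with h' | h'
        · exact absurd (hqle h') (X_not_mem_span (by decide) (by decide))
        · exact absurd (hqle h') (X_not_mem_span (by decide) (by decide))
      · exact h
    rw [P3, Ideal.span_le]
    rintro x hx
    simp only [Set.mem_insert_iff, Set.mem_singleton_iff] at hx
    rcases hx with rfl | rfl
    · exact hX0q q hq hIq
    · exact hw
  exact T.isClean_of_ctx hminP1 hminP2 hminP3
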